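/- Let N ≥ 1 and consider on ℝᴺ \ {0} the functions σ(x) = ‖x‖ − 1 and ρ(x) = 1/2 + 1/(2‖x‖⁴), and define the Christoffel symbols of the conformal metric G = ρ·Id by Γ^γ_{αβ}(x) := (1/(2ρ(x)))·(δ_{γβ}·∂_αρ(x) + δ_{γα}·∂_βρ(x) − δ_{αβ}·∂_γρ(x)), where ∂_α denotes the partial derivative in the α-th coordinate direction. Then for every x ≠ 0 and all indices α, β, the Hessian of σ with respect to G satisfies ∂_α∂_βσ(x) − Σ_γ Γ^γ_{αβ}(x)·∂_γσ(x) = (1/(‖x‖·(1 + ‖x‖⁴)))·( δ_{αβ}·(1 + ‖x‖)·(1 + ‖x‖²)·(‖x‖ − 1) + (3 − ‖x‖⁴)·(x_α/‖x‖)·(x_β/‖x‖) ). -/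

import Mathlib

/-- The partial derivative of `f : ℝᴺ → ℝ` at `x` in the `α`-th coordinate direction. -/
noncomputable def partialDeriv14 {N : ℕ} (f : EuclideanSpace ℝ (Fin N) → ℝ) (α : Fin N)
    (x : EuclideanSpace ℝ (Fin N)) : ℝ :=
  fderiv ℝ f x (EuclideanSpace.single α 1)

open scoped RealInnerProductSpace

section Helpers14

variable {N : ℕ}

lemma hasFDerivAt_norm14 (x : EuclideanSpace ℝ (Fin N)) (hx : x ≠ 0) :
    HasFDerivAt (fun y : EuclideanSpace ℝ (Fin N) => ‖y‖) (‖x‖⁻¹ • innerSL ℝ x) x := by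
  have hx0 : ‖x‖ ≠ 0 := norm_ne_zero_iff.2 hx
  have h1 : HasFDerivAt (fun y : EuclideanSpace ℝ (Fin N) => ‖y‖ ^ 2) (2 • innerSL ℝ x) x :=
    (hasStrictFDerivAt_norm_sq x).hasFDerivAt
  have h2 : HasDerivAt Real.sqrt (1 / (2 * Real.sqrt (‖x‖ ^ 2))) (‖x‖ ^ 2) :=
    Real.hasDerivAt_sqrt (by positivity)
  have h3 := h2.comp_hasFDerivAt x h1
  have heq : (Real.sqrt ∘ fun y : EuclideanSpace ℝ (Fin N) => ‖y‖ ^ 2)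
      = fun y : EuclideanSpace ℝ (Fin N) => ‖y‖ := by
    funext y; simp [Function.comp, Real.sqrt_sq (norm_nonneg y)]
  rw [heq] at h3
  have e : ((1 / (2 * Real.sqrt (‖x‖ ^ 2))) • (2 • innerSL ℝ x) :
      EuclideanSpace ℝ (Fin N) →L[ℝ] ℝ) = ‖x‖⁻¹ • innerSL ℝ x := by
    ext v
    simp only [ContinuousLinearMap.smul_apply, Real.sqrt_sq (norm_nonneg x)]
    field_simp
    ring
  rw [e] at h3; exact h3

lemma inner_single14 (x : EuclideanSpace ℝ (Fin N)) (γ : Fin N) :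
    (innerSL ℝ x) (EuclideanSpace.single γ 1) = x γ := by
  simp [EuclideanSpace.inner_single_right]

lemma pd_sigma14 (x : EuclideanSpace ℝ (Fin N)) (hx : x ≠ 0) (γ : Fin N) :
    partialDeriv14 (fun y => ‖y‖ - 1) γ x = x γ * ‖x‖⁻¹ := by
  have h := (hasFDerivAt_norm14 x hx).sub_const 1
  rw [partialDeriv14, h.fderiv]
  simp [inner_single14]
  ring

lemma pd_rho14 (x : EuclideanSpace ℝ (Fin N)) (hx : x ≠ 0) (γ : Fin N) :
    partialDeriv14 (fun y => 1 / 2 + 1 / (2 * ‖y‖ ^ 4)) γ x = -2 * x γ / ‖x‖ ^ 6 := by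
  have hx0 : ‖x‖ ≠ 0 := norm_ne_zero_iff.2 hx
  have h1 : HasFDerivAt (fun y : EuclideanSpace ℝ (Fin N) => ‖y‖ ^ 2) (2 • innerSL ℝ x) x :=
    (hasStrictFDerivAt_norm_sq x).hasFDerivAt
  have h0 : HasDerivAt (fun t : ℝ => 2 * t ^ 2) (2 * (2 * ‖x‖ ^ 2)) (‖x‖ ^ 2) := by
    simpa using ((hasDerivAt_pow 2 (‖x‖ ^ 2)).const_mul 2)
  have hne : (2 : ℝ) * (‖x‖ ^ 2) ^ 2 ≠ 0 := by positivity
  have h2 : HasDerivAt (fun t : ℝ => 1 / 2 + 1 / (2 * t ^ 2))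
      (-(2 * (2 * ‖x‖ ^ 2)) / (2 * (‖x‖ ^ 2) ^ 2) ^ 2) (‖x‖ ^ 2) := by
    have := (h0.inv hne).const_add (1 / 2)
    simpa [one_div] using this
  have h3 := h2.comp_hasFDerivAt x h1
  have heq : ((fun t : ℝ => 1 / 2 + 1 / (2 * t ^ 2)) ∘
      fun y : EuclideanSpace ℝ (Fin N) => ‖y‖ ^ 2)
      = fun y : EuclideanSpace ℝ (Fin N) => 1 / 2 + 1 / (2 * ‖y‖ ^ 4) := by
    funext y; simp [Function.comp]; ring_nf
  rw [heq] at h3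
  rw [partialDeriv14, h3.fderiv]
  simp [inner_single14]
  field_simp

lemma pd_pd_sigma14 (x : EuclideanSpace ℝ (Fin N)) (hx : x ≠ 0) (α β : Fin N) :
    partialDeriv14 (fun y => partialDeriv14 (fun z => ‖z‖ - 1) β y) α x
      = (if α = β then (1 : ℝ) else 0) * ‖x‖⁻¹ - x α * x β / ‖x‖ ^ 3 := by
  have hx0 : ‖x‖ ≠ 0 := norm_ne_zero_iff.2 hx
  have hev : (fun y => partialDeriv14 (fun z : EuclideanSpace ℝ (Fin N) => ‖z‖ - 1) β y)
      =ᶠ[nhds x] fun y => y β * ‖y‖⁻¹ := by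
    filter_upwards [IsOpen.mem_nhds isOpen_compl_singleton hx] with y hy
    exact pd_sigma14 y hy β
  have h1 : HasFDerivAt (fun y : EuclideanSpace ℝ (Fin N) => y β)
      (EuclideanSpace.proj β : EuclideanSpace ℝ (Fin N) →L[ℝ] ℝ) x := by
    simpa [PiLp.proj_apply] using
      (EuclideanSpace.proj β : EuclideanSpace ℝ (Fin N) →L[ℝ] ℝ).hasFDerivAt (x := x)
  have h2 : HasFDerivAt (fun y : EuclideanSpace ℝ (Fin N) => ‖y‖⁻¹)
      ((-(‖x‖ ^ 2)⁻¹ : ℝ) • (‖x‖⁻¹ • innerSL ℝ x)) x :=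
    (hasDerivAt_inv hx0).comp_hasFDerivAt x (hasFDerivAt_norm14 x hx)
  have h3 : HasFDerivAt (fun y : EuclideanSpace ℝ (Fin N) => y β * ‖y‖⁻¹) _ x := h1.mul h2
  rw [partialDeriv14, hev.fderiv_eq, h3.fderiv]
  simp [inner_single14, PiLp.proj_apply, EuclideanSpace.single_apply]
  rcases eq_or_ne α β with h | h
  · subst h; simp; field_simp; ring
  · simp [h, Ne.symm h]; field_simp


end Helpers14

/-- The Hessian of `σ(x) = ‖x‖ - 1` with respect to the conformal metric
`G = ρ·Id`, `ρ(x) = 1/2 + 1/(2‖x‖⁴)`, is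
`(1/(‖x‖(1+‖x‖⁴)))·(δ_{αβ}(1+‖x‖)(1+‖x‖²)(‖x‖-1) + (3-‖x‖⁴)·x̂_α·x̂_β)`. -/
theorem hessian_of_signed_distance_wrt_conformal_metric
    {N : ℕ} (hN : 1 ≤ N)
    (σ ρ : EuclideanSpace ℝ (Fin N) → ℝ)
    (hσ : ∀ x, σ x = ‖x‖ - 1)
    (hρ : ∀ x, ρ x = 1 / 2 + 1 / (2 * ‖x‖ ^ 4))
    (Γ : Fin N → Fin N → Fin N → EuclideanSpace ℝ (Fin N) → ℝ)
    (hΓ : ∀ γ α β x, Γ γ α β x = (1 / (2 * ρ x)) *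
      ((if γ = β then (1 : ℝ) else 0) * partialDeriv14 ρ α x
        + (if γ = α then (1 : ℝ) else 0) * partialDeriv14 ρ β x
        - (if α = β then (1 : ℝ) else 0) * partialDeriv14 ρ γ x)) :
    ∀ x : EuclideanSpace ℝ (Fin N), x ≠ 0 → ∀ α β : Fin N,
      partialDeriv14 (fun y => partialDeriv14 σ β y) α x
          - ∑ γ, Γ γ α β x * partialDeriv14 σ γ x
        = (1 / (‖x‖ * (1 + ‖x‖ ^ 4))) *
            ((if α = β then (1 : ℝ) else 0) * (1 + ‖x‖) * (1 + ‖x‖ ^ 2) * (‖x‖ - 1)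
              + (3 - ‖x‖ ^ 4) * (x α / ‖x‖) * (x β / ‖x‖)) := by
  have hσ' : σ = fun x => ‖x‖ - 1 := funext hσ
  subst hσ'
  have hρ' : ρ = fun x => 1 / 2 + 1 / (2 * ‖x‖ ^ 4) := funext hρ
  subst hρ'
  intro x hx α β
  have hx0 : ‖x‖ ≠ 0 := norm_ne_zero_iff.2 hx
  have hr4 : (1 : ℝ) + ‖x‖ ^ 4 ≠ 0 := by positivity
  have hsum : ∑ γ, x γ * x γ = ‖x‖ ^ 2 := by
    rw [EuclideanSpace.norm_sq_eq]
    refine Finset.sum_congr rfl fun i _ => ?_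
    rw [Real.norm_eq_abs, sq_abs, sq]
  have hcv : (1 : ℝ) / (2 * (1 / 2 + 1 / (2 * ‖x‖ ^ 4))) = ‖x‖ ^ 4 / (1 + ‖x‖ ^ 4) := by
    rw [div_eq_div_iff (by positivity) (by positivity)]
    field_simp
    ring
  have hΓ2 : ∀ γ : Fin N,
      Γ γ α β x * partialDeriv14 (fun y => ‖y‖ - 1) γ x
        = (if γ = β then ‖x‖ ^ 4 / (1 + ‖x‖ ^ 4) * (-2 * x α / ‖x‖ ^ 6) * (x γ * ‖x‖⁻¹) else 0)
          + (if γ = α then ‖x‖ ^ 4 / (1 + ‖x‖ ^ 4) * (-2 * x β / ‖x‖ ^ 6) * (x γ * ‖x‖⁻¹) else 0)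
          - ((if α = β then (1 : ℝ) else 0)
              * (‖x‖ ^ 4 / (1 + ‖x‖ ^ 4) * (-2 / ‖x‖ ^ 6) * ‖x‖⁻¹)) * (x γ * x γ) := by
    intro γ
    rw [hΓ]
    simp only [pd_rho14 x hx, pd_sigma14 x hx]
    rw [hcv]
    split_ifs <;> field_simp <;> ring
  rw [pd_pd_sigma14 x hx α β, Finset.sum_congr rfl fun γ _ => hΓ2 γ]
  rw [Finset.sum_sub_distrib, Finset.sum_add_distrib, Finset.sum_ite_eq',
    Finset.sum_ite_eq', ← Finset.mul_sum, hsum]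
  simp only [Finset.mem_univ, if_true]
  rcases eq_or_ne α β with h | h
  · subst h
    simp only [if_pos rfl, one_mul]
    field_simp
    ring
  · simp only [if_neg h, zero_mul, one_mul]
    field_simp
    ring
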